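/- The kernel of the reduction homomorphism GL(n,ℤ) → GL(n,ℤ/3ℤ) is torsion-free; i.e., if A ∈ GL(n,ℤ) has finite order and A ≡ I (mod 3), then A = I. -/

import Mathlib

open Finset in
private lemma pow2_dvd {n : ℕ} {N : Matrix (Fin n) (Fin n) ℤ} {k : ℕ}
    (hdvd : ∀ a b, (3:ℤ)^k ∣ N a b) (m : ℕ) (a b : Fin n) :
    (3:ℤ)^(2*k) ∣ (N ^ (m+2)) a b := by
  have h : N ^ (m+2) = N ^ m * (N * N) := by rw [pow_add, pow_two]
  rw [h, Matrix.mul_apply]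
  refine Finset.dvd_sum fun c _ => Dvd.dvd.mul_left ?_ _
  rw [Matrix.mul_apply, two_mul, pow_add]
  exact Finset.dvd_sum fun d _ => mul_dvd_mul (hdvd c d) (hdvd d b)

open Finset in
private lemma key_step {n p : ℕ} (hp : p.Prime) {N : Matrix (Fin n) (Fin n) ℤ}
    (hM : (N + 1) ^ p = 1) {k : ℕ} (hk : 1 ≤ k)
    (hdvd : ∀ a b, (3:ℤ)^k ∣ N a b) (a b : Fin n) : (3:ℤ)^(k+1) ∣ N a b := by
  have hexp := (Commute.one_right N).add_pow p
  rw [hM] at hexp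
  simp only [one_pow, mul_one] at hexp
  have hcomm : ∀ m : ℕ, N ^ m * ((p.choose m : ℕ) : Matrix (Fin n) (Fin n) ℤ)
      = (p.choose m) • N ^ m := fun m => by
    rw [nsmul_eq_mul, (Nat.cast_commute (p.choose m) (N ^ m)).eq]
  simp_rw [hcomm] at hexp
  have hent : (1 : Matrix (Fin n) (Fin n) ℤ) a b
      = ∑ m ∈ range (p + 1), (p.choose m : ℤ) * (N ^ m) a b := by
    have h0 := congrArg (fun M : Matrix (Fin n) (Fin n) ℤ => M a b) hexp
    simp only [Matrix.sum_apply, Matrix.smul_apply] at h0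
    simp only [nsmul_eq_mul] at h0
    exact h0
  have hp2 : 2 ≤ p := hp.two_le
  have hpeq : p + 1 = (p - 2) + 1 + 1 + 1 := by omega
  rw [hpeq, Finset.sum_range_succ', Finset.sum_range_succ'] at hent
  simp only [pow_zero, pow_one, Nat.choose_zero_right, Nat.cast_one, one_mul, zero_add,
    Nat.choose_one_right, Matrix.one_apply] at hent
  have hsum : (p:ℤ) * N a b
      = -∑ m ∈ range (p - 2 + 1), (p.choose (m + 1 + 1) : ℤ) * (N ^ (m + 1 + 1)) a b := by
    by_cases hab : a = b
    · subst hab; simp only [if_pos rfl] at hent; linarith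
    · simp only [if_neg hab] at hent; linarith
  by_cases h3 : p = 3
  · subst h3
    have hterm : ∀ m ∈ range (3 - 2 + 1), (3:ℤ)^(k+2) ∣
        ((3:ℕ).choose (m + 1 + 1) : ℤ) * (N ^ (m + 1 + 1)) a b := by
      intro m hm
      simp only [Finset.mem_range] at hm
      interval_cases m
      · have h1 := pow2_dvd hdvd 0 a b
        have : (3:ℤ)^(k+2) ∣ 3 * (N^2) a b := by
          calc (3:ℤ)^(k+2) = 3 * 3^(k+1) := by ring
          _ ∣ 3 * (N^2) a b :=
            mul_dvd_mul dvd_rfl (dvd_trans (pow_dvd_pow 3 (show k+1 ≤ 2*k by omega)) h1)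
        simpa using this
      · have h2 : (3:ℤ)^(k+2) ∣ (N^3) a b := by
          have hN3 : N ^ 3 = N * N ^ 2 := by
            rw [pow_succ, pow_two, mul_assoc, ← pow_two]
          have : (3:ℤ)^(k + 2*k) ∣ (N^3) a b := by
            rw [hN3, Matrix.mul_apply, pow_add]
            exact Finset.dvd_sum fun c _ =>
              mul_dvd_mul (hdvd a c) (pow2_dvd hdvd 0 c b)
          exact dvd_trans (pow_dvd_pow 3 (show k+2 ≤ k+2*k by omega)) this
        simpa using h2
    have hdvd3 : (3:ℤ) * 3^(k+1) ∣ 3 * N a b := by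
      have h := dvd_neg.mpr (Finset.dvd_sum hterm)
      rw [← hsum] at h
      rw [show (3:ℤ) * 3^(k+1) = 3^(k+2) by ring]
      exact_mod_cast h
    exact (mul_dvd_mul_iff_left (by norm_num : (3:ℤ) ≠ 0)).mp hdvd3
  · have hdvdp : (3:ℤ)^(k+1) ∣ (p:ℤ) * N a b := by
      rw [hsum]
      refine dvd_neg.mpr (Finset.dvd_sum fun m _ => ?_)
      have h1 : (3:ℤ)^(k+1) ∣ (N ^ (m+1+1)) a b :=
        dvd_trans (pow_dvd_pow 3 (show k+1 ≤ 2*k by omega)) (pow2_dvd hdvd m a b)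
      exact Dvd.dvd.mul_left h1 _
    have hcop : IsCoprime ((3:ℤ)^(k+1)) (p:ℤ) := by
      refine IsCoprime.pow_left ?_
      rw [Int.isCoprime_iff_gcd_eq_one]
      have : Nat.Coprime 3 p := (Nat.coprime_primes (by norm_num) hp).mpr (Ne.symm h3)
      simpa [Int.gcd] using this
    exact hcop.dvd_of_dvd_mul_left hdvdp

private lemma key {n p : ℕ} (hp : p.Prime) (M : Matrix (Fin n) (Fin n) ℤ)
    (hM : M ^ p = 1) (hmod : ∀ a b, (3:ℤ) ∣ (M - 1) a b) : M = 1 := by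
  set N := M - 1 with hN
  have hM' : (N + 1) ^ p = 1 := by rw [hN, sub_add_cancel]; exact hM
  have hall : ∀ k, 1 ≤ k → ∀ a b, (3:ℤ)^k ∣ N a b := by
    intro k hk
    induction k with
    | zero => omega
    | succ k ih =>
      rcases Nat.lt_or_ge 1 (k + 1) with h | h
      · exact fun a b => key_step hp hM' (by omega) (ih (by omega)) a b
      · have : k = 0 := by omega
        subst this
        intro a b; simpa using hmod a b
  have hzero : N = 0 := by
    ext a b
    have hk := hall ((N a b).natAbs + 1) (by omega) a b
    have hlt : |N a b| < (3:ℤ)^((N a b).natAbs + 1) := by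
      rw [Int.abs_eq_natAbs]
      have h1 := Nat.lt_pow_self (n := (N a b).natAbs + 1) (by norm_num : 1 < 3)
      calc ((N a b).natAbs : ℤ) < (((N a b).natAbs + 1 : ℕ) : ℤ) := by push_cast; omega
      _ < ((3 ^ ((N a b).natAbs + 1) : ℕ) : ℤ) := by exact_mod_cast h1
      _ = (3:ℤ)^((N a b).natAbs + 1) := by push_cast; ring
    simpa using Int.eq_zero_of_abs_lt_dvd hk hlt
  have h := sub_eq_zero.mp (hN ▸ hzero)
  exact h

/-- Minkowski's lemma: the kernel of reduction mod 3, `GL(n,ℤ) → GL(n,ℤ/3)`, is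
torsion-free: a finite-order `A ∈ GL(n,ℤ)` with `A ≡ I (mod 3)` is the identity. -/
theorem stmt_10 (n : ℕ) (A : GL (Fin n) ℤ) (hA : IsOfFinOrder A)
    (h3 : ((A : Matrix (Fin n) (Fin n) ℤ)).map (Int.cast : ℤ → ZMod 3) = 1) :
    A = 1 := by
  by_contra hne
  set m := orderOf A with hm
  have hmpos : 0 < m := hA.orderOf_pos
  have hm1 : m ≠ 1 := fun h => hne (orderOf_eq_one_iff.mp (hm ▸ h))
  set p := m.minFac with hpdef
  have hp : p.Prime := Nat.minFac_prime hm1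
  have hpdvd : p ∣ m := Nat.minFac_dvd m
  set B := A ^ (m / p) with hB
  have hBp : B ^ p = 1 := by
    rw [hB, ← pow_mul, Nat.div_mul_cancel hpdvd, hm, pow_orderOf_eq_one]
  have hBne : B ≠ 1 := by
    intro h
    have hdvd2 : m ∣ m / p := orderOf_dvd_of_pow_eq_one (hm ▸ h)
    have hlt : m / p < m := Nat.div_lt_self hmpos hp.one_lt
    have hpos : 0 < m / p := Nat.div_pos (Nat.le_of_dvd hmpos hpdvd) hp.pos
    have := Nat.le_of_dvd hpos hdvd2
    omega
  have hmat : (B : Matrix (Fin n) (Fin n) ℤ) ^ p = 1 := by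
    have := congrArg Units.val hBp
    simpa [Units.val_pow_eq_pow_val] using this
  have hmap : (B : Matrix (Fin n) (Fin n) ℤ).map (Int.cast : ℤ → ZMod 3) = 1 := by
    have hcoe : (B : Matrix (Fin n) (Fin n) ℤ)
        = (A : Matrix (Fin n) (Fin n) ℤ) ^ (m / p) := by
      rw [hB]; simp [Units.val_pow_eq_pow_val]
    rw [hcoe]
    have h2 : ((A : Matrix (Fin n) (Fin n) ℤ) ^ (m/p)).map (Int.cast : ℤ → ZMod 3)
        = ((A : Matrix (Fin n) (Fin n) ℤ).map (Int.cast : ℤ → ZMod 3)) ^ (m/p) := by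
      have := map_pow ((Int.castRingHom (ZMod 3)).mapMatrix)
        (A : Matrix (Fin n) (Fin n) ℤ) (m/p)
      simpa [RingHom.mapMatrix_apply] using this
    rw [h2, h3, one_pow]
  have hmod : ∀ a b, (3:ℤ) ∣ ((B : Matrix (Fin n) (Fin n) ℤ) - 1) a b := by
    intro a b
    have hm0 : (((B : Matrix (Fin n) (Fin n) ℤ) - 1).map (Int.cast : ℤ → ZMod 3)) = 0 := by
      have hms := map_sub ((Int.castRingHom (ZMod 3)).mapMatrix)
        (B : Matrix (Fin n) (Fin n) ℤ) 1
      simp only [RingHom.mapMatrix_apply] at hms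
      rw [show ((1 : Matrix (Fin n) (Fin n) ℤ)).map (Int.castRingHom (ZMod 3))
        = (1 : Matrix (Fin n) (Fin n) (ZMod 3)) from
          map_one ((Int.castRingHom (ZMod 3)).mapMatrix)] at hms
      rw [show ((B : Matrix (Fin n) (Fin n) ℤ)).map (Int.castRingHom (ZMod 3))
        = (1 : Matrix (Fin n) (Fin n) (ZMod 3)) from hmap] at hms
      rw [show ((B : Matrix (Fin n) (Fin n) ℤ) - 1).map (Int.cast : ℤ → ZMod 3)
        = ((B : Matrix (Fin n) (Fin n) ℤ) - 1).map (Int.castRingHom (ZMod 3)) from rfl]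
      rw [hms, sub_self]
    have h0 : ((((B : Matrix (Fin n) (Fin n) ℤ) - 1) a b : ℤ) : ZMod 3) = 0 := by
      have := congrArg (fun M : Matrix (Fin n) (Fin n) (ZMod 3) => M a b) hm0
      simpa [Matrix.map_apply] using this
    exact (ZMod.intCast_zmod_eq_zero_iff_dvd _ 3).mp h0
  have hB1 : (B : Matrix (Fin n) (Fin n) ℤ) = 1 := key hp _ hmat hmod
  exact hBne (Units.ext hB1)
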